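/- Let M, N be symmetric ℓ×ℓ real matrices and assume N is indefinite, i.e., there exist vectors u, v with uᵀNu > 0 and vᵀNv < 0. Then xᵀMx ≥ 0 for all x ∈ ℝ^ℓ with xᵀNx = 0 if and only if there exists α ∈ ℝ such that M − αN is positive semidefinite. -/

import Mathlib

open Matrix

private lemma symm_dot {l : ℕ} (A : Matrix (Fin l) (Fin l) ℝ) (hA : Aᵀ = A)
    (x y : Fin l → ℝ) : y ⬝ᵥ (A *ᵥ x) = x ⬝ᵥ (A *ᵥ y) := by
  rw [dotProduct_mulVec, ← mulVec_transpose, hA, dotProduct_comm]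

private lemma quad_expand {l : ℕ} (A : Matrix (Fin l) (Fin l) ℝ) (hA : Aᵀ = A)
    (x y : Fin l → ℝ) (r : ℝ) :
    (r • x + y) ⬝ᵥ (A *ᵥ (r • x + y)) =
      (x ⬝ᵥ (A *ᵥ x)) * r^2 + 2 * (x ⬝ᵥ (A *ᵥ y)) * r + y ⬝ᵥ (A *ᵥ y) := by
  simp [mulVec_add, dotProduct_add, add_dotProduct, mulVec_smul, smul_dotProduct,
    dotProduct_smul, symm_dot A hA x y]
  ring

private lemma key_scalar (fx fy gx gy a : ℝ) (b : ℝ) (hx : 0 < gx) (hy : gy < 0)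
    (hyp : ∀ r : ℝ, gx * r^2 + 2*b*r + gy = 0 → 0 ≤ fx * r^2 + 2*a*r + fy) :
    fx * gy ≤ fy * gx := by
  set d := Real.sqrt (b^2 - gx*gy) with hd
  have hdpos : 0 < b^2 - gx*gy := by nlinarith
  have hd2 : d^2 = b^2 - gx*gy := Real.sq_sqrt hdpos.le
  have hdb : b < d ∧ -d < b := by
    constructor <;> nlinarith [Real.sqrt_nonneg (b^2 - gx*gy)]
  set r1 := (-b - d)/gx with hr1
  set r2 := (-b + d)/gx with hr2
  have hne : gx ≠ 0 := ne_of_gt hx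
  have e1 : gx * r1 = -b - d := by rw [hr1]; field_simp
  have e2 : gx * r2 = -b + d := by rw [hr2]; field_simp
  have hr1neg : r1 < 0 := div_neg_of_neg_of_pos (by linarith [hdb.1]) hx
  have hr2pos : 0 < r2 := div_pos (by linarith [hdb.1]) hx
  have root1 : gx * r1^2 + 2*b*r1 + gy = 0 := by
    have : gx * (gx * r1^2 + 2*b*r1 + gy) = 0 := by nlinarith [e1, hd2]
    exact (mul_eq_zero.mp this).resolve_left hne
  have root2 : gx * r2^2 + 2*b*r2 + gy = 0 := by
    have : gx * (gx * r2^2 + 2*b*r2 + gy) = 0 := by nlinarith [e2, hd2]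
    exact (mul_eq_zero.mp this).resolve_left hne
  have h1 := hyp r1 root1
  have h2 := hyp r2 root2
  have hprod : gx * (r1 * r2) = gy := by
    have : gx * (gx * (r1*r2)) = gx * gy := by nlinarith [e1, e2, hd2]
    exact mul_left_cancel₀ hne this
  have hcomb : 0 ≤ (r2 - r1) * (fy - fx * (r1 * r2)) := by nlinarith
  have h3 : 0 ≤ fy - fx * (r1 * r2) :=
    nonneg_of_mul_nonneg_right hcomb (by linarith)
  have h4 : 0 ≤ fy * gx - fx * (gx * (r1 * r2)) := by nlinarith [mul_nonneg h3 hx.le]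
  rw [hprod] at h4
  linarith

private lemma key {l : ℕ} (M N : Matrix (Fin l) (Fin l) ℝ)
    (hM : Mᵀ = M) (hN : Nᵀ = N)
    (hyp : ∀ x : Fin l → ℝ, x ⬝ᵥ (N *ᵥ x) = 0 → 0 ≤ x ⬝ᵥ (M *ᵥ x))
    (x y : Fin l → ℝ) (hx : 0 < x ⬝ᵥ (N *ᵥ x)) (hy : y ⬝ᵥ (N *ᵥ y) < 0) :
    (x ⬝ᵥ (M *ᵥ x)) * (y ⬝ᵥ (N *ᵥ y)) ≤ (y ⬝ᵥ (M *ᵥ y)) * (x ⬝ᵥ (N *ᵥ x)) := by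
  refine key_scalar _ _ _ _ (x ⬝ᵥ (M *ᵥ y)) (x ⬝ᵥ (N *ᵥ y)) hx hy (fun r hr => ?_)
  have hroot : (r • x + y) ⬝ᵥ (N *ᵥ (r • x + y)) = 0 := by
    rw [quad_expand N hN]; linarith
  have := hyp _ hroot
  rw [quad_expand M hM] at this
  linarith

/-- Classical non-strict Finsler's lemma (Proposition 6). -/
theorem nonstrict_finsler {l : ℕ}
    (M N : Matrix (Fin l) (Fin l) ℝ)
    (hM : Mᵀ = M) (hN : Nᵀ = N)
    (hindef : ∃ u v : Fin l → ℝ, 0 < u ⬝ᵥ (N *ᵥ u) ∧ v ⬝ᵥ (N *ᵥ v) < 0) :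
    (∀ x : Fin l → ℝ, x ⬝ᵥ (N *ᵥ x) = 0 → 0 ≤ x ⬝ᵥ (M *ᵥ x)) ↔
      ∃ α : ℝ, (M - α • N).PosSemidef := by
  obtain ⟨u, v, hu, hv⟩ := hindef
  constructor
  · intro hyp
    -- scalar quadratic form values
    set f : (Fin l → ℝ) → ℝ := fun x => x ⬝ᵥ (M *ᵥ x) with hf
    set g : (Fin l → ℝ) → ℝ := fun x => x ⬝ᵥ (N *ᵥ x) with hg
    set S : Set ℝ := {r | ∃ x, 0 < g x ∧ r = f x / g x} with hS
    have hSne : S.Nonempty := ⟨f u / g u, u, hu, rfl⟩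
    have hlow : ∀ y, g y < 0 → f y / g y ∈ lowerBounds S := by
      rintro y hy r ⟨x, hx, rfl⟩
      have hk : f x * g y ≤ f y * g x := key M N hM hN hyp x y hx hy
      have hgy0 : g y ≠ 0 := ne_of_lt hy
      have hgx0 : g x ≠ 0 := ne_of_gt hx
      have h1 : f y / g y - f x / g x = (f y * g x - f x * g y)/(g y * g x) := by
        field_simp
      have h2 : f y / g y - f x / g x ≤ 0 := by
        rw [h1]
        exact div_nonpos_of_nonneg_of_nonpos (by linarith) (by nlinarith)
      linarith
    have hbdd : BddBelow S := ⟨f v / g v, hlow v hv⟩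
    set α := sInf S with hα
    refine ⟨α, Matrix.PosSemidef.of_dotProduct_mulVec_nonneg ?_ fun x => ?_⟩
    · have : (M - α • N)ᵀ = M - α • N := by
        rw [transpose_sub, transpose_smul, hM, hN]
      rw [Matrix.IsHermitian, conjTranspose_eq_transpose_of_trivial]
      exact this
    · have hsx : (star x : Fin l → ℝ) = x := by simp
      have hexp : star x ⬝ᵥ ((M - α • N) *ᵥ x) = f x - α * g x := by
        rw [hsx, sub_mulVec, dotProduct_sub, smul_mulVec, dotProduct_smul]
        simp [hf, hg]
      rw [hexp]
      rcases lt_trichotomy (g x) 0 with hgx | hgx | hgx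
      · have hle : f x / g x ≤ α := le_csInf hSne (hlow x hgx)
        rw [div_le_iff_of_neg hgx] at hle
        linarith
      · have := hyp x hgx
        simp only [hf, hg] at *
        rw [hgx]; simpa using this
      · have hge : α ≤ f x / g x := csInf_le hbdd ⟨x, hgx, rfl⟩
        rw [le_div_iff₀ hgx] at hge
        linarith
  · rintro ⟨α, hP⟩ x hx
    have := hP.dotProduct_mulVec_nonneg x
    have hsx : (star x : Fin l → ℝ) = x := by simp
    rw [hsx, sub_mulVec, dotProduct_sub, smul_mulVec, dotProduct_smul] at this
    simp only [smul_eq_mul, hx, mul_zero, sub_zero] at this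
    exact this
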